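/- Define c : [0,∞) → ℝ by c(0) = π²/6 and, for t > 0, c(t) = 2(-log Γ(t+1) + t·ψ(t+1))/t², where ψ is the digamma function. Then c(t) > 0 for all t ≥ 0, and c(t) → 0 as t → +∞. -/

import Mathlib

open Real Filter Set

namespace CurvatureAux

noncomputable def f : ℝ → ℝ := fun s => Real.log (Real.Gamma s)
noncomputable def ψ : ℝ → ℝ := deriv f

lemma diff_f {x : ℝ} (hx : 0 < x) : DifferentiableAt ℝ f x := by
  have h1 : DifferentiableAt ℝ Real.Gamma x :=
    Real.differentiableAt_Gamma fun m =>
      ((neg_nonpos.mpr (Nat.cast_nonneg m)).trans_lt hx).ne'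
  exact h1.log (Real.Gamma_pos_of_pos hx).ne'

lemma hconv : ConvexOn ℝ (Ioi 0) f := Real.convexOn_log_Gamma

lemma le_slope {x y : ℝ} (hx : 0 < x) (hxy : x < y) : ψ x ≤ (f y - f x) / (y - x) := by
  have := hconv.deriv_le_slope (mem_Ioi.mpr hx) (mem_Ioi.mpr (hx.trans hxy)) hxy (diff_f hx)
  rwa [slope_def_field] at this

lemma slope_le {x y : ℝ} (hx : 0 < x) (hxy : x < y) : (f y - f x) / (y - x) ≤ ψ y := by
  have := hconv.slope_le_deriv (mem_Ioi.mpr hx) (mem_Ioi.mpr (hx.trans hxy)) hxy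
    (diff_f (hx.trans hxy))
  rwa [slope_def_field] at this

lemma ψ_mono {x y : ℝ} (hx : 0 < x) (hxy : x ≤ y) : ψ x ≤ ψ y := by
  rcases hxy.eq_or_lt with rfl | h
  · exact le_rfl
  · exact (le_slope hx h).trans (slope_le hx h)

lemma f_one : f 1 = 0 := by simp [f, Real.Gamma_one]

lemma f_two : f 2 = 0 := by simp [f, Real.Gamma_two]

lemma f_add_one {x : ℝ} (hx : 0 < x) : f (x + 1) = f x + Real.log x := by
  unfold f
  rw [Real.Gamma_add_one hx.ne', Real.log_mul hx.ne' (Real.Gamma_pos_of_pos hx).ne', add_comm]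

lemma ψ_strictMono {x y : ℝ} (hx : 0 < x) (hxy : x < y) : ψ x < ψ y := by
  rcases lt_or_ge (ψ x) (ψ y) with h | h
  · exact h
  exfalso
  have hy : 0 < y := hx.trans hxy
  have heq : ψ y = ψ x := le_antisymm h (ψ_mono hx hxy.le)
  set m := ψ x with hm
  have hyx : 0 < y - x := by linarith
  have h1 : m ≤ (f y - f x) / (y - x) := le_slope hx hxy
  have h2 : (f y - f x) / (y - x) ≤ m := heq ▸ slope_le hx hxy
  have hfy : f y = f x + m * (y - x) := by
    have : (f y - f x) / (y - x) = m := le_antisymm h2 h1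
    field_simp at this
    linarith
  set w := (x + y) / 2 with hwdef
  have hxw : x < w := by simp only [hwdef]; linarith
  have hwy : w < y := by simp only [hwdef]; linarith
  have hw : 0 < w := hx.trans hxw
  have h3 : m ≤ (f w - f x) / (w - x) := le_slope hx hxw
  have h3' : f x + m * (w - x) ≤ f w := by
    have hwx : 0 < w - x := by linarith
    rw [le_div_iff₀ hwx] at h3
    linarith
  have h4 : f w ≤ (1/2 : ℝ) * f x + (1/2 : ℝ) * f y := by
    have := hconv.2 (mem_Ioi.mpr hx) (mem_Ioi.mpr hy)
      (by norm_num : (0:ℝ) ≤ 1/2) (by norm_num : (0:ℝ) ≤ 1/2) (by norm_num)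
    have hcomb : (1/2 : ℝ) • x + (1/2 : ℝ) • y = w := by
      simp only [smul_eq_mul, hwdef]; ring
    rw [hcomb] at this
    simpa [smul_eq_mul] using this
  have hfw : f w = f x + m * (w - x) := by
    have : (1/2 : ℝ) * f x + (1/2 : ℝ) * f y = f x + m * (w - x) := by
      rw [hfy]; simp only [hwdef]; ring
    linarith [h4, h3']
  have h5 : f (w + 1) ≤ (1/2 : ℝ) * f (x + 1) + (1/2 : ℝ) * f (y + 1) := by
    have := hconv.2 (mem_Ioi.mpr (by linarith : (0:ℝ) < x + 1))
      (mem_Ioi.mpr (by linarith : (0:ℝ) < y + 1))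
      (by norm_num : (0:ℝ) ≤ 1/2) (by norm_num : (0:ℝ) ≤ 1/2) (by norm_num)
    have hcomb : (1/2 : ℝ) • (x + 1) + (1/2 : ℝ) • (y + 1) = w + 1 := by
      simp only [smul_eq_mul, hwdef]; ring
    rw [hcomb] at this
    simpa [smul_eq_mul] using this
  rw [f_add_one hx, f_add_one hy, f_add_one hw] at h5
  have h6 : Real.log w ≤ (1/2) * Real.log x + (1/2) * Real.log y := by
    rw [hfw, hfy] at h5
    simp only [hwdef] at h5 ⊢
    nlinarith [h5]
  have h7 := strictConcaveOn_log_Ioi.2 (mem_Ioi.mpr hx) (mem_Ioi.mpr hy) hxy.ne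
    (one_half_pos (α := ℝ)) (one_half_pos (α := ℝ)) (by norm_num)
  have hcomb : (1/2 : ℝ) • x + (1/2 : ℝ) • y = w := by
    simp only [smul_eq_mul, hwdef]; ring
  rw [hcomb] at h7
  simp only [smul_eq_mul] at h7
  linarith

lemma N_pos {t : ℝ} (ht : 0 < t) : f (t + 1) < t * ψ (t + 1) := by
  set m := 1 + t / 2 with hmdef
  have h1m : (1:ℝ) < m := by simp only [hmdef]; linarith
  have hmt : m < t + 1 := by simp only [hmdef]; linarith
  have h0m : 0 < m := by linarith
  have hA : (f m - f 1) / (m - 1) ≤ ψ m := slope_le one_pos h1m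
  have hB : (f (t + 1) - f m) / (t + 1 - m) ≤ ψ (t + 1) := slope_le h0m hmt
  have hC : ψ m < ψ (t + 1) := ψ_strictMono h0m hmt
  rw [div_le_iff₀ (by linarith : (0:ℝ) < m - 1)] at hA
  rw [div_le_iff₀ (by linarith : (0:ℝ) < t + 1 - m)] at hB
  rw [f_one] at hA
  nlinarith [hA, hB, hC]

lemma ψ_le_log {t : ℝ} (ht : 0 < t) : ψ (t + 1) ≤ Real.log (t + 1) := by
  have h1 : (0:ℝ) < t + 1 := by linarith
  have := le_slope h1 (lt_add_one (t + 1))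
  rw [f_add_one h1] at this
  simpa using this

lemma ψ_ge {x : ℝ} (hx : 1 < x) : Real.log (x - 1) ≤ ψ x := by
  have h0 : (0:ℝ) < x - 1 := by linarith
  have := slope_le h0 (by linarith : x - 1 < x)
  have hx' : x - 1 + 1 = x := by ring
  rw [← hx', f_add_one h0] at this
  simpa [hx'] using this

lemma f_lower {t : ℝ} (ht : 1 ≤ t) : t * Real.log t - t + 1 ≤ f (t + 1) := by
  have h2 : (2:ℝ) ≤ t + 1 := by linarith
  have huIcc : uIcc (2:ℝ) (t+1) = Icc 2 (t+1) := uIcc_of_le h2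
  have hψint : IntervalIntegrable ψ MeasureTheory.volume 2 (t+1) := by
    apply MonotoneOn.intervalIntegrable
    intro a ha b hb hab
    rw [huIcc] at ha
    exact ψ_mono (by linarith [ha.1] : (0:ℝ) < a) hab
  have hFTC : ∫ s in (2:ℝ)..(t+1), ψ s = f (t+1) - f 2 := by
    apply intervalIntegral.integral_eq_sub_of_hasDerivAt
    · intro x hx
      rw [huIcc] at hx
      exact (diff_f (by linarith [hx.1] : (0:ℝ) < x)).hasDerivAt
    · exact hψint
  have hlogint : IntervalIntegrable (fun s => Real.log (s - 1)) MeasureTheory.volume 2 (t+1) := by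
    apply ContinuousOn.intervalIntegrable
    intro x hx
    rw [huIcc] at hx
    exact (((continuousAt_id.sub continuousAt_const).log
      (by show x - 1 ≠ 0; intro h; have := hx.1; linarith [sub_eq_zero.mp h])).continuousWithinAt)
  have hle : ∫ s in (2:ℝ)..(t+1), Real.log (s - 1) ≤ ∫ s in (2:ℝ)..(t+1), ψ s := by
    apply intervalIntegral.integral_mono_on h2 hlogint hψint
    intro x hx
    exact ψ_ge (by linarith [hx.1] : 1 < x)
  have hval : ∫ s in (2:ℝ)..(t+1), Real.log (s - 1) = t * Real.log t - t + 1 := by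
    have h0 : (0:ℝ) ∉ uIcc ((2:ℝ)-1) (t+1-1) := by
      rw [uIcc_of_le (by linarith)]
      simp only [mem_Icc]; push_neg; intro h; linarith
    rw [intervalIntegral.integral_comp_sub_right (fun u => Real.log u) 1,
        integral_log]
    norm_num
  rw [hFTC, f_two] at hle
  rw [hval] at hle
  linarith

lemma N_le {t : ℝ} (ht : 1 ≤ t) : t * ψ (t + 1) - f (t + 1) ≤ t := by
  have ht0 : (0:ℝ) < t := by linarith
  have h1 := ψ_le_log ht0
  have h2 := f_lower ht
  have h3 : Real.log (t + 1) ≤ Real.log t + 1 / t := by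
    have hdiv : Real.log (t + 1) - Real.log t = Real.log ((t+1)/t) := by
      rw [Real.log_div (by linarith) (by linarith)]
    have : Real.log ((t+1)/t) ≤ (t+1)/t - 1 :=
      Real.log_le_sub_one_of_pos (by positivity)
    have h4 : (t+1)/t - 1 = 1/t := by field_simp; ring
    linarith [hdiv ▸ this, h4 ▸ this]
  have e1 : t * ψ (t+1) ≤ t * Real.log (t+1) := mul_le_mul_of_nonneg_left h1 ht0.le
  have e2 : t * Real.log (t+1) ≤ t * (Real.log t + 1/t) := mul_le_mul_of_nonneg_left h3 ht0.le
  have e3 : t * (Real.log t + 1/t) = t * Real.log t + 1 := by field_simp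
  linarith

end CurvatureAux

open CurvatureAux in
/-- The curvature function `c` with `c(0) = π²/6` and
`c(t) = 2(-log Γ(t+1) + t ψ(t+1))/t²` for `t > 0` (where `ψ = (log Γ)'` is the
digamma function) is positive on `[0,∞)` and tends to `0` at `+∞`. -/
theorem curvature_pos_tendsto_zero (c : ℝ → ℝ)
    (hc0 : c 0 = π ^ 2 / 6)
    (hct : ∀ t : ℝ, 0 < t →
      c t = 2 * (-Real.log (Real.Gamma (t + 1))
        + t * deriv (fun s : ℝ => Real.log (Real.Gamma s)) (t + 1)) / t ^ 2) :
    (∀ t : ℝ, 0 ≤ t → 0 < c t) ∧ Tendsto c atTop (nhds 0) := by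
  have hψ : deriv (fun s : ℝ => Real.log (Real.Gamma s)) = ψ := rfl
  have hpos : ∀ t : ℝ, 0 ≤ t → 0 < c t := by
    intro t ht
    rcases ht.eq_or_lt with rfl | ht
    · rw [hc0]; positivity
    · rw [hct t ht, hψ]
      have hN := N_pos ht
      have : Real.log (Real.Gamma (t + 1)) = f (t + 1) := rfl
      rw [this]
      have hnum : 0 < -f (t + 1) + t * ψ (t + 1) := by linarith
      positivity
  refine ⟨hpos, ?_⟩
  have hub : ∀ t : ℝ, 1 ≤ t → c t ≤ 2 / t := by
    intro t ht
    have ht0 : (0:ℝ) < t := by linarith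
    rw [hct t ht0, hψ]
    have hN := N_le ht
    have : Real.log (Real.Gamma (t + 1)) = f (t + 1) := rfl
    rw [this]
    rw [div_le_div_iff₀ (by positivity) ht0]
    nlinarith [hN]
  apply tendsto_of_tendsto_of_tendsto_of_le_of_le' tendsto_const_nhds
    (Tendsto.div_atTop (tendsto_const_nhds (x := (2:ℝ))) tendsto_id)
  · filter_upwards [eventually_ge_atTop (1:ℝ)] with t ht
    exact (hpos t (by linarith)).le
  · filter_upwards [eventually_ge_atTop (1:ℝ)] with t ht
    exact hub t ht
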